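/- arXiv:math/0511419 — 2 statements merged into one kernel-verified Lean document; each statement's English description precedes it below -/
import Mathlib

section
/- For n ≥ 1, the number of permutations w of {1,...,n} with as(w) ≤ 2 equals 2^{n-1}. -/
/-- The list of values of a permutation of `Fin n` (0-indexed; relative order
is what matters). -/
def permList (n : ℕ) (w : Equiv.Perm (Fin n)) : List ℕ :=
  List.ofFn (fun i => (w i : ℕ))

/-- A list is alternating: `a > b < c > d < ⋯` (descents in even positions). -/
def IsAlt (l : List ℕ) : Prop :=
  ∀ i : ℕ, ∀ hi : i + 1 < l.length,
    if i % 2 = 0 then l.get ⟨i + 1, hi⟩ < l.get ⟨i, Nat.lt_of_succ_lt hi⟩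
    else l.get ⟨i, Nat.lt_of_succ_lt hi⟩ < l.get ⟨i + 1, hi⟩

/-- `asLen n w` : the maximum length of an alternating subsequence of `w`. -/
noncomputable def asLen (n : ℕ) (w : Equiv.Perm (Fin n)) : ℕ :=
  sSup {k | ∃ l : List ℕ, l.Sublist (permList n w) ∧ IsAlt l ∧ l.length = k}

/-- `aCount n k = #{w ∈ S_n : as(w) = k}`. -/
noncomputable def aCount (n k : ℕ) : ℕ :=
  Nat.card {w : Equiv.Perm (Fin n) // asLen n w = k}

/-- `bCount n k = #{w ∈ S_n : as(w) ≤ k}`. -/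
noncomputable def bCount (n k : ℕ) : ℕ :=
  Nat.card {w : Equiv.Perm (Fin n) // asLen n w ≤ k}

/-! ### Auxiliary development -/

/-- The forbidden pattern: a "valley" `w i > w j < w k` with `i < j < k`. -/
def Pat {n : ℕ} (w : Equiv.Perm (Fin n)) : Prop :=
  ∃ i j k : Fin n, i < j ∧ j < k ∧ w j < w i ∧ w j < w k

lemma permList_length (n : ℕ) (w : Equiv.Perm (Fin n)) : (permList n w).length = n := by
  simp [permList]

lemma permList_get (n : ℕ) (w : Equiv.Perm (Fin n)) (p : Fin (permList n w).length) :
    (permList n w).get p = (w (Fin.cast (permList_length n w) p) : ℕ) := by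
  simp only [permList, List.get_ofFn]
  exact List.get_ofFn _ _

lemma bddAbove_asSet (n : ℕ) (w : Equiv.Perm (Fin n)) :
    BddAbove {k | ∃ l : List ℕ, l.Sublist (permList n w) ∧ IsAlt l ∧ l.length = k} := by
  refine ⟨n, ?_⟩
  rintro k ⟨l, hl, -, rfl⟩
  exact hl.length_le.trans_eq (permList_length n w)

lemma pat_of_three {n : ℕ} (w : Equiv.Perm (Fin n)) (l : List ℕ)
    (hl : l.Sublist (permList n w)) (halt : IsAlt l) (h3 : 3 ≤ l.length) : Pat w := by
  obtain ⟨f, hf⟩ := List.sublist_iff_exists_fin_orderEmbedding_get_eq.mp hl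
  have h0 : 0 < l.length := by omega
  have h1 : 1 < l.length := by omega
  have h2 : 2 < l.length := by omega
  set i := Fin.cast (permList_length n w) (f ⟨0, h0⟩) with hi
  set j := Fin.cast (permList_length n w) (f ⟨1, h1⟩) with hj
  set k := Fin.cast (permList_length n w) (f ⟨2, h2⟩) with hk
  have hij : i < j := by
    simp only [hi, hj, Fin.lt_def, Fin.coe_cast]
    exact f.strictMono (by simp [Fin.lt_def])
  have hjk : j < k := by
    simp only [hj, hk, Fin.lt_def, Fin.coe_cast]
    exact f.strictMono (by simp [Fin.lt_def])
  have e0 : l.get ⟨0, h0⟩ = (w i : ℕ) := by rw [hf, permList_get]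
  have e1 : l.get ⟨1, h1⟩ = (w j : ℕ) := by rw [hf, permList_get]
  have e2 : l.get ⟨2, h2⟩ = (w k : ℕ) := by rw [hf, permList_get]
  have a0 := halt 0 h1
  have a1 := halt 1 h2
  rw [if_pos (by norm_num)] at a0
  rw [if_neg (by norm_num)] at a1
  rw [e0, e1] at a0
  rw [e1, e2] at a1
  exact ⟨i, j, k, hij, hjk, a0, a1⟩

lemma three_mem_of_pat {n : ℕ} (w : Equiv.Perm (Fin n)) (h : Pat w) :
    3 ∈ {k | ∃ l : List ℕ, l.Sublist (permList n w) ∧ IsAlt l ∧ l.length = k} := by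
  obtain ⟨i, j, k, hij, hjk, h1, h2⟩ := h
  refine ⟨[(w i : ℕ), (w j : ℕ), (w k : ℕ)], ?_, ?_, rfl⟩
  · rw [List.sublist_iff_exists_fin_orderEmbedding_get_eq]
    have hij' : (i : ℕ) < (j : ℕ) := hij
    have hjk' : (j : ℕ) < (k : ℕ) := hjk
    set vec : ℕ → ℕ := fun x => if x = 0 then (i : ℕ) else if x = 1 then (j : ℕ) else (k : ℕ)
      with hvecdef
    have hvec : ∀ x : ℕ, vec x < n := by
      intro x
      have := i.isLt; have := j.isLt; have := k.isLt
      simp only [hvecdef]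
      split_ifs <;> omega
    have hmono : ∀ a b : ℕ, a < b → b < 3 → vec a < vec b := by
      intro a b hab hb
      simp only [hvecdef]
      split_ifs <;> omega
    refine ⟨OrderEmbedding.ofStrictMono
      (fun x : Fin ([(w i : ℕ), (w j : ℕ), (w k : ℕ)].length) =>
        (⟨vec (x : ℕ), by rw [permList_length]; exact hvec _⟩ :
          Fin (permList n w).length)) ?_, ?_⟩
    · intro a b hab
      have ha3 : (a : ℕ) < 3 := a.isLt
      have hb3 : (b : ℕ) < 3 := b.isLt
      simp only [Fin.mk_lt_mk]
      exact hmono _ _ hab hb3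
    · intro ix
      have hix : (ix : ℕ) < 3 := ix.isLt
      rw [permList_get]
      rcases ix with ⟨iv, hiv⟩
      interval_cases iv <;>
        simp only [hvecdef, List.get_eq_getElem] <;> norm_num
  · intro a ha
    have ha' : a < 2 := by simp only [List.length_cons, List.length_nil] at ha; omega
    interval_cases a
    · rw [if_pos (by norm_num)]
      exact h1
    · rw [if_neg (by norm_num)]
      exact h2

lemma asLen_le_two_iff {n : ℕ} (w : Equiv.Perm (Fin n)) :
    asLen n w ≤ 2 ↔ ¬ Pat w := by
  constructor
  · intro hle hpat
    have h3 : 3 ≤ asLen n w := le_csSup (bddAbove_asSet n w) (three_mem_of_pat w hpat)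
    omega
  · intro hpat
    apply csSup_le'
    rintro k ⟨l, hl, halt, rfl⟩
    by_contra hk
    exact hpat (pat_of_three w l hl halt (by omega))

/-! ### Unimodal structure -/

section Count

variable {m : ℕ}

open Finset

lemma lt_last_of_ne {v : Fin (m + 1)} (h : v ≠ Fin.last m) : v < Fin.last m := by
  rcases Fin.lt_or_eq_of_le (Fin.le_last v) with h' | h'
  · exact h'
  · exact absurd h' h

/-- The set of values appearing before the maximum. -/
def phi (w : Equiv.Perm (Fin (m + 1))) : Finset (Fin (m + 1)) :=
  Finset.univ.filter fun v => w.symm v < w.symm (Fin.last m)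

lemma mem_phi {w : Equiv.Perm (Fin (m + 1))} {v : Fin (m + 1)} :
    v ∈ phi w ↔ w.symm v < w.symm (Fin.last m) := by simp [phi]

lemma top_not_mem_phi (w : Equiv.Perm (Fin (m + 1))) : Fin.last m ∉ phi w := by
  simp [phi]

lemma phi_card (w : Equiv.Perm (Fin (m + 1))) :
    (phi w).card = (w.symm (Fin.last m) : ℕ) := by
  have himg : phi w = Finset.image w (Finset.Iio (w.symm (Fin.last m))) := by
    ext v
    simp only [mem_phi, Finset.mem_image, Finset.mem_Iio]
    constructor
    · intro h
      exact ⟨w.symm v, h, by simp⟩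
    · rintro ⟨p, hp, rfl⟩
      simpa using hp
  rw [himg, Finset.card_image_of_injective _ w.injective, Fin.card_Iio]

lemma mono_incr {w : Equiv.Perm (Fin (m + 1))} (hw : ¬ Pat w) {i j : Fin (m + 1)}
    (hij : i < j) (hj : j ≤ w.symm (Fin.last m)) : w i < w j := by
  rcases hj.lt_or_eq with hj' | rfl
  · by_contra hcon
    have hne : w i ≠ w j := fun h => hij.ne (w.injective h)
    have h1 : w j < w i := lt_of_le_of_ne (not_lt.mp hcon) (Ne.symm hne)
    have h2 : w j < w (w.symm (Fin.last m)) := by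
      rw [Equiv.apply_symm_apply]
      exact lt_last_of_ne fun h => hj'.ne (by
        have := congrArg w.symm h
        simpa using this)
    exact hw ⟨i, j, w.symm (Fin.last m), hij, hj', h1, h2⟩
  · rw [Equiv.apply_symm_apply]
    exact lt_last_of_ne fun h => hij.ne (by
      have := congrArg w.symm h
      simpa using this)

lemma mono_decr {w : Equiv.Perm (Fin (m + 1))} (hw : ¬ Pat w) {i j : Fin (m + 1)}
    (hij : i < j) (hi : w.symm (Fin.last m) ≤ i) : w j < w i := by
  rcases hi.lt_or_eq with hi' | hi'
  · by_contra hcon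
    have hne : w i ≠ w j := fun h => hij.ne (w.injective h)
    have h1 : w i < w j := lt_of_le_of_ne (not_lt.mp hcon) hne
    have h2 : w i < w (w.symm (Fin.last m)) := by
      rw [Equiv.apply_symm_apply]
      exact lt_last_of_ne fun h => hi'.ne' (by
        have := congrArg w.symm h
        simpa using this)
    exact hw ⟨w.symm (Fin.last m), i, j, hi', hij, h2, h1⟩
  · rw [← hi', Equiv.apply_symm_apply]
    exact lt_last_of_ne fun h => (hi'.trans_lt hij).ne' (by
      have := congrArg w.symm h
      simpa using this)

lemma card_le_of_not_mem {s : Finset (Fin (m + 1))} (hs : Fin.last m ∉ s) :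
    s.card ≤ m := by
  have hsub : s ⊆ Finset.univ.erase (Fin.last m) := fun v hv =>
    Finset.mem_erase.mpr ⟨fun h => hs (h ▸ hv), Finset.mem_univ v⟩
  calc s.card ≤ (Finset.univ.erase (Fin.last m)).card := Finset.card_le_card hsub
    _ = m := by
      rw [Finset.card_erase_of_mem (Finset.mem_univ _), Finset.card_univ, Fintype.card_fin]
      omega

lemma card_compl {s : Finset (Fin (m + 1))} (hs : Fin.last m ∉ s) :
    (Finset.univ \ insert (Fin.last m) s).card = m - s.card := by
  rw [Finset.card_sdiff_of_subset (Finset.subset_univ _), Finset.card_insert_of_notMem hs,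
    Finset.card_univ, Fintype.card_fin]
  omega

/-- The canonical unimodal function with prescribed value set before the max. -/
noncomputable def psiFun (s : Finset (Fin (m + 1))) (hs : Fin.last m ∉ s) :
    Fin (m + 1) → Fin (m + 1) := fun p =>
  if h : (p : ℕ) < s.card then s.orderEmbOfFin rfl ⟨p, h⟩
  else if h2 : (p : ℕ) = s.card then Fin.last m
  else (Finset.univ \ insert (Fin.last m) s).orderEmbOfFin (card_compl hs)
    ⟨m - p, by
      have hm := card_le_of_not_mem hs
      have := p.isLt
      omega⟩

lemma psiFun_lt {s : Finset (Fin (m + 1))} (hs : Fin.last m ∉ s) {p : Fin (m + 1)}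
    (hp : (p : ℕ) < s.card) :
    psiFun s hs p = s.orderEmbOfFin rfl ⟨p, hp⟩ := by
  simp [psiFun, hp]

lemma psiFun_eq {s : Finset (Fin (m + 1))} (hs : Fin.last m ∉ s) {p : Fin (m + 1)}
    (hp : (p : ℕ) = s.card) : psiFun s hs p = Fin.last m := by
  simp [psiFun, hp]

lemma psiFun_gt {s : Finset (Fin (m + 1))} (hs : Fin.last m ∉ s) {p : Fin (m + 1)}
    (hp : s.card < (p : ℕ)) :
    psiFun s hs p = (Finset.univ \ insert (Fin.last m) s).orderEmbOfFin (card_compl hs)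
      ⟨m - p, by have := p.isLt; have := card_le_of_not_mem hs; omega⟩ := by
  have h1 : ¬ ((p : ℕ) < s.card) := by omega
  have h2 : ¬ ((p : ℕ) = s.card) := by omega
  unfold psiFun
  rw [dif_neg h1, dif_neg h2]

lemma psiFun_mem_lt {s : Finset (Fin (m + 1))} (hs : Fin.last m ∉ s) {p : Fin (m + 1)}
    (hp : (p : ℕ) < s.card) : psiFun s hs p ∈ s := by
  rw [psiFun_lt hs hp]; exact Finset.orderEmbOfFin_mem _ _ _

lemma psiFun_mem_gt {s : Finset (Fin (m + 1))} (hs : Fin.last m ∉ s) {p : Fin (m + 1)}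
    (hp : s.card < (p : ℕ)) :
    psiFun s hs p ∈ Finset.univ \ insert (Fin.last m) s := by
  rw [psiFun_gt hs hp]; exact Finset.orderEmbOfFin_mem _ _ _

lemma psiFun_lt_of {s : Finset (Fin (m + 1))} (hs : Fin.last m ∉ s) {i j : Fin (m + 1)}
    (hij : i < j) (hj : (j : ℕ) ≤ s.card) : psiFun s hs i < psiFun s hs j := by
  have hi : (i : ℕ) < s.card := lt_of_lt_of_le hij hj
  rcases hj.lt_or_eq with hj' | hj'
  · rw [psiFun_lt hs hi, psiFun_lt hs hj']
    exact (s.orderEmbOfFin rfl).strictMono (by exact hij)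
  · rw [psiFun_eq hs hj']
    refine lt_last_of_ne fun h => ?_
    have : Fin.last m ∈ s := h ▸ psiFun_mem_lt hs hi
    exact hs this

lemma psiFun_gt_of {s : Finset (Fin (m + 1))} (hs : Fin.last m ∉ s) {i j : Fin (m + 1)}
    (hij : i < j) (hi : s.card ≤ (i : ℕ)) : psiFun s hs j < psiFun s hs i := by
  have hj : s.card < (j : ℕ) := lt_of_le_of_lt hi hij
  rcases hi.lt_or_eq with hi' | hi'
  · rw [psiFun_gt hs hi', psiFun_gt hs hj]
    apply ((Finset.univ \ insert (Fin.last m) s).orderEmbOfFin (card_compl hs)).strictMono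
    have := j.isLt
    simp only [Fin.mk_lt_mk]
    omega
  · rw [psiFun_eq hs hi'.symm]
    refine lt_last_of_ne fun h => ?_
    have hmem : Fin.last m ∈ Finset.univ \ insert (Fin.last m) s := h ▸ psiFun_mem_gt hs hj
    simp at hmem

lemma psiFun_injective {s : Finset (Fin (m + 1))} (hs : Fin.last m ∉ s) :
    Function.Injective (psiFun s hs) := by
  have aux : ∀ p q : Fin (m + 1), p < q → psiFun s hs p ≠ psiFun s hs q := by
    intro p q hpq
    rcases le_or_gt (q : ℕ) s.card with hq | hq
    · exact (psiFun_lt_of hs hpq hq).ne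
    · rcases le_or_gt s.card (p : ℕ) with hp | hp
      · exact (psiFun_gt_of hs hpq hp).ne'
      · intro h
        have h1 : psiFun s hs p ∈ s := psiFun_mem_lt hs hp
        have h2 := psiFun_mem_gt hs hq
        rw [← h] at h2
        simp only [Finset.mem_sdiff, Finset.mem_insert] at h2
        exact h2.2 (Or.inr h1)
  intro p q h
  by_contra hne
  rcases lt_or_gt_of_ne hne with h' | h'
  · exact aux p q h' h
  · exact aux q p h' h.symm

/-- The canonical unimodal permutation. -/
noncomputable def psiPerm (s : Finset (Fin (m + 1))) (hs : Fin.last m ∉ s) :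
    Equiv.Perm (Fin (m + 1)) :=
  Equiv.ofBijective (psiFun s hs) (Finite.injective_iff_bijective.mp (psiFun_injective hs))

lemma psiPerm_apply (s : Finset (Fin (m + 1))) (hs : Fin.last m ∉ s) (p : Fin (m + 1)) :
    psiPerm s hs p = psiFun s hs p := rfl

lemma psiPerm_not_pat (s : Finset (Fin (m + 1))) (hs : Fin.last m ∉ s) :
    ¬ Pat (psiPerm s hs) := by
  rintro ⟨i, j, k, hij, hjk, h1, h2⟩
  rw [psiPerm_apply, psiPerm_apply] at h1 h2
  rcases lt_trichotomy (j : ℕ) s.card with hj | hj | hj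
  · exact absurd h1 (not_lt.mpr (psiFun_lt_of hs hij hj.le).le)
  · rw [psiFun_eq hs hj] at h2
    exact absurd h2 (not_lt.mpr (Fin.le_last _))
  · exact absurd h2 (not_lt.mpr (psiFun_gt_of hs hjk hj.le).le)

lemma psiPerm_symm_top (s : Finset (Fin (m + 1))) (hs : Fin.last m ∉ s) :
    (psiPerm s hs).symm (Fin.last m) = ⟨s.card, by have := card_le_of_not_mem hs; omega⟩ := by
  rw [Equiv.symm_apply_eq, psiPerm_apply, psiFun_eq hs rfl]

lemma phi_psiPerm (s : Finset (Fin (m + 1))) (hs : Fin.last m ∉ s) :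
    phi (psiPerm s hs) = s := by
  ext v
  rw [mem_phi, psiPerm_symm_top s hs]
  constructor
  · intro h
    have hv : (psiPerm s hs) ((psiPerm s hs).symm v) = v := Equiv.apply_symm_apply _ _
    rw [psiPerm_apply] at hv
    have hlt : (((psiPerm s hs).symm v : Fin (m + 1)) : ℕ) < s.card := h
    rw [← hv]
    exact psiFun_mem_lt hs hlt
  · intro hv
    have hrange : v ∈ Set.range (s.orderEmbOfFin rfl) := by
      rw [Finset.range_orderEmbOfFin]; exact hv
    obtain ⟨i, hi⟩ := hrange
    have hcard := card_le_of_not_mem hs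
    set p : Fin (m + 1) := ⟨i, by omega⟩ with hp
    have hplt : (p : ℕ) < s.card := i.isLt
    have : psiPerm s hs p = v := by
      rw [psiPerm_apply, psiFun_lt hs hplt, ← hi]
    rw [← this, Equiv.symm_apply_apply]
    exact hplt

/-- Any pattern-avoiding permutation equals the canonical one built from its `phi`. -/
lemma eq_psiPerm {w : Equiv.Perm (Fin (m + 1))} (hw : ¬ Pat w) :
    w = psiPerm (phi w) (top_not_mem_phi w) := by
  set s := phi w with hsdef
  set M := w.symm (Fin.last m) with hM
  have hcard : s.card = (M : ℕ) := phi_card w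
  have hMlt := M.isLt
  ext p
  rw [psiPerm_apply]
  rcases lt_trichotomy (p : ℕ) s.card with hp | hp | hp
  · -- increasing part
    have hlt : ∀ i : Fin s.card, (i : ℕ) < m + 1 := fun i => by
      have := i.isLt; omega
    set f : Fin s.card → Fin (m + 1) := fun i => w ⟨i, hlt i⟩ with hf
    have hmono : StrictMono f := by
      intro a b hab
      apply mono_incr hw
      · exact hab
      · rw [← hM]
        have := b.isLt
        rw [Fin.le_def]
        simp only
        omega
    have hmem : ∀ i, f i ∈ s := by
      intro i
      rw [hsdef, mem_phi]
      simp only [hf, Equiv.symm_apply_apply]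
      rw [← hM, Fin.lt_def]
      have := i.isLt
      simp only
      omega
    have huniq : f = s.orderEmbOfFin rfl := Finset.orderEmbOfFin_unique rfl hmem hmono
    have : w p = f ⟨p, hp⟩ := by
      simp only [hf]
    rw [this, huniq, psiFun_lt (top_not_mem_phi w) hp]
  · -- the max
    have hpM : p = M := Fin.ext (by rw [← hcard]; exact hp)
    rw [psiFun_eq (top_not_mem_phi w) hp, hpM, hM, Equiv.apply_symm_apply]
  · -- decreasing part
    set c := Finset.univ \ insert (Fin.last m) s with hc
    have hccard : c.card = m - s.card := card_compl (top_not_mem_phi w)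
    have hlt : ∀ i : Fin c.card, m - (i : ℕ) < m + 1 := fun i => by omega
    set g : Fin c.card → Fin (m + 1) := fun i => w ⟨m - i, hlt i⟩ with hg
    have hbounds : ∀ i : Fin c.card, (i : ℕ) < m - s.card := fun i => by
      have := i.isLt; omega
    have hmono : StrictMono g := by
      intro a b hab
      apply mono_decr hw
      · have hb := hbounds b
        have ha := hbounds a
        rw [Fin.lt_def]
        simp only
        rw [Fin.lt_def] at hab
        omega
      · rw [← hM, Fin.le_def]
        have hb := hbounds b
        simp only
        omega
    have hmem : ∀ i, g i ∈ c := by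
      intro i
      have hib := hbounds i
      rw [hc, Finset.mem_sdiff]
      refine ⟨Finset.mem_univ _, ?_⟩
      rw [Finset.mem_insert]
      push_neg
      constructor
      · intro h
        have : (⟨m - (i : ℕ), hlt i⟩ : Fin (m + 1)) = M := by
          rw [hM, ← h, hg]; simp
        have := congrArg Fin.val this
        simp only at this
        omega
      · intro h
        rw [hsdef, mem_phi] at h
        simp only [hg, Equiv.symm_apply_apply, ← hM, Fin.lt_def] at h
        omega
    have huniq : g = c.orderEmbOfFin rfl := Finset.orderEmbOfFin_unique rfl hmem hmono
    have hple := p.isLt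
    have hidx : m - (p : ℕ) < c.card := by omega
    have : w p = g ⟨m - p, hidx⟩ := by
      simp only [hg]
      congr 1
      apply Fin.ext
      simp only
      omega
    rw [this, huniq, psiFun_gt (top_not_mem_phi w) hp]
    congr 1

lemma phi_injective {w w' : Equiv.Perm (Fin (m + 1))} (hw : ¬ Pat w) (hw' : ¬ Pat w')
    (h : phi w = phi w') : w = w' := by
  rw [eq_psiPerm hw, eq_psiPerm hw']
  congr 1

/-! ### Counting -/

lemma card_not_pat (m : ℕ) :
    Nat.card {w : Equiv.Perm (Fin (m + 1)) // ¬ Pat w} = 2 ^ m := by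
  have hB : Nat.card {s : Finset (Fin (m + 1)) // Fin.last m ∉ s} = 2 ^ m := by
    rw [Nat.card_eq_fintype_card, Fintype.card_subtype]
    have hpow : Finset.univ.filter (fun s : Finset (Fin (m + 1)) => Fin.last m ∉ s) =
        (Finset.univ.erase (Fin.last m)).powerset := by
      ext s
      simp [Finset.subset_erase]
    rw [hpow, Finset.card_powerset, Finset.card_erase_of_mem (Finset.mem_univ _),
      Finset.card_univ, Fintype.card_fin]
    norm_num
  rw [← hB]
  apply le_antisymm
  · apply Nat.card_le_card_of_injective
      (fun w : {w : Equiv.Perm (Fin (m + 1)) // ¬ Pat w} =>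
        (⟨phi w.1, top_not_mem_phi w.1⟩ : {s : Finset (Fin (m + 1)) // Fin.last m ∉ s}))
    intro a b hab
    exact Subtype.ext (phi_injective a.2 b.2 (congrArg Subtype.val hab))
  · apply Nat.card_le_card_of_injective
      (fun s : {s : Finset (Fin (m + 1)) // Fin.last m ∉ s} =>
        (⟨psiPerm s.1 s.2, psiPerm_not_pat s.1 s.2⟩ : {w : Equiv.Perm (Fin (m + 1)) // ¬ Pat w}))
    intro a b hab
    have : psiPerm a.1 a.2 = psiPerm b.1 b.2 := congrArg Subtype.val hab
    have h2 : phi (psiPerm a.1 a.2) = phi (psiPerm b.1 b.2) := by rw [this]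
    rw [phi_psiPerm, phi_psiPerm] at h2
    exact Subtype.ext h2

end Count

theorem bCount_two (n : ℕ) (hn : 1 ≤ n) : bCount n 2 = 2 ^ (n - 1) := by
  obtain ⟨m, rfl⟩ : ∃ m, n = m + 1 := ⟨n - 1, by omega⟩
  simp only [Nat.add_sub_cancel]
  unfold bCount
  rw [Nat.card_congr (Equiv.subtypeEquivRight (fun w => asLen_le_two_iff w))]
  exact card_not_pat m
end

section
/- For n ≥ 2, T_n(t) = (1/2)(1+t) G_n(t), where T_n(t) = Σ_k a_k(n) t^k and G_n(t) = Σ_k g_k(n) t^k. -/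
/-- The number of alternating runs (maximal monotone consecutive blocks) of `w`:
for `n ≥ 2` it is `1 +` the number of interior turning points. -/
def runCount (n : ℕ) (w : Equiv.Perm (Fin n)) : ℕ :=
  let l := permList n w
  if n ≤ 1 then n
  else 1 + ((Finset.range (n - 2)).filter (fun i =>
    (l[i]! < l[i+1]! ∧ l[i+2]! < l[i+1]!) ∨
    (l[i+1]! < l[i]! ∧ l[i+1]! < l[i+2]!))).card

/-- `gCount n k = #{w ∈ S_n : w has exactly k alternating runs}`. -/
noncomputable def gCount (n k : ℕ) : ℕ :=
  Nat.card {w : Equiv.Perm (Fin n) // runCount n w = k}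


namespace AltAux

/-- value at index, default 0 -/
def val (l : List ℕ) (i : ℕ) : ℕ := l.getD i 0

lemma val_eq (l : List ℕ) {i : ℕ} (h : i < l.length) : val l i = l[i] :=
  List.getD_eq_getElem l 0 h

lemma val_drop (l : List ℕ) (m i : ℕ) : val (l.drop m) i = val l (m + i) := by
  simp [val, List.getD_eq_getElem?_getD, List.getElem?_drop]

lemma val_take (l : List ℕ) {m i : ℕ} (h : i < m) : val (l.take m) i = val l i := by
  simp [val, List.getD_eq_getElem?_getD, List.getElem?_take, h]

/-- turning point at `i` (meaningful for `i + 2 < l.length`) -/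
def turnP (l : List ℕ) (i : ℕ) : Prop :=
  (val l i < val l (i+1) ∧ val l (i+2) < val l (i+1)) ∨
  (val l (i+1) < val l i ∧ val l (i+1) < val l (i+2))

instance (l : List ℕ) (i : ℕ) : Decidable (turnP l i) := by
  unfold turnP; infer_instance

/-- number of interior turning points -/
def T (l : List ℕ) : ℕ :=
  ((Finset.range (l.length - 2)).filter (fun i => turnP l i)).card

/-- first step is a descent -/
def fb (l : List ℕ) : Bool := decide (val l 1 < val l 0)

/-- alternating, `d = true` means starting with a descent -/
def Alt : Bool → List ℕ → Prop
  | _, [] => True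
  | _, [_] => True
  | d, a :: b :: t => (if d then b < a else a < b) ∧ Alt (!d) (b :: t)

lemma alt_nil (d : Bool) : Alt d [] := trivial
lemma alt_single (d : Bool) (a : ℕ) : Alt d [a] := trivial

lemma alt_cons_cons {d : Bool} {a b : ℕ} {t : List ℕ} :
    Alt d (a :: b :: t) ↔ (if d then b < a else a < b) ∧ Alt (!d) (b :: t) := Iff.rfl

lemma alt_cons {d : Bool} {a : ℕ} {l : List ℕ} (h : Alt d (a :: l)) : Alt (!d) l := by
  cases l with
  | nil => trivial
  | cons b t => exact h.2

lemma alt_append_left {d : Bool} {s1 s2 : List ℕ} (h : Alt d (s1 ++ s2)) : Alt d s1 := by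
  induction s1 generalizing d with
  | nil => trivial
  | cons a t ih =>
    cases t with
    | nil => trivial
    | cons b t' =>
      rw [List.cons_append, List.cons_append] at h
      exact ⟨h.1, ih (d := !d) h.2⟩

lemma alt_append_right {d : Bool} {s1 s2 : List ℕ} (h : Alt d (s1 ++ s2)) :
    Alt (if s1.length % 2 = 0 then d else !d) s2 := by
  induction s1 generalizing d with
  | nil => simpa using h
  | cons a t ih =>
    rw [List.cons_append] at h
    have h2 := alt_cons h
    have := ih (d := !d) h2
    rcases Nat.even_or_odd t.length with he | ho
    · have h0 : t.length % 2 = 0 := Nat.even_iff.mp he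
      have h1 : (t.length + 1) % 2 ≠ 0 := by omega
      simp only [List.length_cons, h1, if_neg, h0, if_pos] at this ⊢
      simpa using this
    · have h0 : t.length % 2 ≠ 0 := by have := Nat.odd_iff.mp ho; omega
      have h1 : (t.length + 1) % 2 = 0 := by have := Nat.odd_iff.mp ho; omega
      simp only [List.length_cons, h1, if_pos, h0, if_neg, not_false_iff] at this ⊢
      simpa using this

/-- indexed version of `Alt` -/
def IsAltB (d : Bool) (l : List ℕ) : Prop :=
  ∀ i : ℕ, ∀ hi : i + 1 < l.length,
    if (i % 2 = 0) = (d = true) then l.get ⟨i + 1, hi⟩ < l.get ⟨i, Nat.lt_of_succ_lt hi⟩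
    else l.get ⟨i, Nat.lt_of_succ_lt hi⟩ < l.get ⟨i + 1, hi⟩

lemma isAlt_iff_isAltB (l : List ℕ) : IsAlt l ↔ IsAltB true l := by
  unfold IsAlt IsAltB
  constructor <;> intro h i hi <;> have := h i hi <;>
    by_cases hp : i % 2 = 0 <;> simp [hp] at this ⊢ <;> exact this

lemma isAltB_cons_cons {d : Bool} {a b : ℕ} {t : List ℕ} :
    IsAltB d (a :: b :: t) ↔ (if d then b < a else a < b) ∧ IsAltB (!d) (b :: t) := by
  constructor
  · intro h
    constructor
    · have := h 0 (by simp)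
      cases d <;> simpa using this
    · intro i hi
      have hi' : i + 1 + 1 < (a :: b :: t).length := by simp at hi ⊢; omega
      have := h (i+1) hi'
      have hpar : ((i+1) % 2 = 0) = (¬ (i % 2 = 0)) := by
        simp only [eq_iff_iff]; omega
      by_cases hp : i % 2 = 0 <;> cases d <;>
        simp [hpar, hp, List.get] at this ⊢ <;> exact this
  · rintro ⟨h1, h2⟩ i hi
    match i with
    | 0 => cases d <;> simpa using h1
    | (j+1) =>
      have hj : j + 1 < (b :: t).length := by simp at hi ⊢; omega
      have := h2 j hj
      have hpar : ((j+1) % 2 = 0) = (¬ (j % 2 = 0)) := by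
        simp only [eq_iff_iff]; omega
      by_cases hp : j % 2 = 0 <;> cases d <;>
        simp [hpar, hp, List.get] at this ⊢ <;> exact this

lemma isAltB_iff_alt : ∀ (l : List ℕ) (d : Bool), IsAltB d l ↔ Alt d l := by
  intro l
  induction l with
  | nil => intro d; constructor <;> intro _ <;> first | trivial | (intro i hi; simp at hi)
  | cons a t ih =>
    intro d
    cases t with
    | nil =>
      constructor <;> intro _
      · trivial
      · intro i hi; simp at hi
    | cons b t' =>
      rw [isAltB_cons_cons, alt_cons_cons, ih]

lemma isAlt_iff_alt (l : List ℕ) : IsAlt l ↔ Alt true l := by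
  rw [isAlt_iff_isAltB, isAltB_iff_alt]

/-- chain of strict steps gives strict comparison -/
lemma chain_lt {f : ℕ → ℕ} {a b : ℕ} (h : ∀ i, a ≤ i → i + 1 ≤ b → f i < f (i+1))
    (hab : a < b) : f a < f b := by
  induction b with
  | zero => omega
  | succ b ih =>
    rcases Nat.lt_or_ge a b with h1 | h1
    · exact lt_trans (ih (fun i h2 h3 => h i h2 (by omega)) h1) (h b (by omega) le_rfl)
    · have : a = b := by omega
      subst this; exact h a le_rfl le_rfl

lemma chain_gt {f : ℕ → ℕ} {a b : ℕ} (h : ∀ i, a ≤ i → i + 1 ≤ b → f (i+1) < f i)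
    (hab : a < b) : f b < f a := by
  induction b with
  | zero => omega
  | succ b ih =>
    rcases Nat.lt_or_ge a b with h1 | h1
    · exact lt_trans (h b (by omega) le_rfl) (ih (fun i h2 h3 => h i h2 (by omega)) h1)
    · have : a = b := by omega
      subst this; exact h a le_rfl le_rfl

lemma pairwise_lt_of_steps (l : List ℕ) (h : ∀ i, i + 1 < l.length → val l i < val l (i+1)) :
    l.Pairwise (· < ·) := by
  rw [List.pairwise_iff_getElem]
  intro i j hi hj hij
  rw [← val_eq l hi, ← val_eq l hj]
  exact chain_lt (fun k h1 h2 => h k (by omega)) hij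

lemma pairwise_gt_of_steps (l : List ℕ) (h : ∀ i, i + 1 < l.length → val l (i+1) < val l i) :
    l.Pairwise (· > ·) := by
  rw [List.pairwise_iff_getElem]
  intro i j hi hj hij
  rw [← val_eq l hi, ← val_eq l hj]
  exact chain_gt (fun k h1 h2 => h k (by omega)) hij

/-- short alternating lists in monotone context -/
lemma alt_true_lt {s : List ℕ} (ha : Alt true s) (hp : s.Pairwise (· < ·)) :
    s.length ≤ 1 := by
  match s with
  | [] => simp
  | [a] => simp
  | a :: b :: t =>
    exfalso
    have h1 : b < a := ha.1
    have h2 : a < b := (List.pairwise_cons.mp hp).1 b (by simp)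
    omega

lemma alt_false_gt {s : List ℕ} (ha : Alt false s) (hp : s.Pairwise (· > ·)) :
    s.length ≤ 1 := by
  match s with
  | [] => simp
  | [a] => simp
  | a :: b :: t =>
    exfalso
    have h1 : a < b := ha.1
    have h2 : a > b := (List.pairwise_cons.mp hp).1 b (by simp)
    omega

lemma alt_true_gt {s : List ℕ} (ha : Alt true s) (hp : s.Pairwise (· > ·)) :
    s.length ≤ 2 := by
  match s with
  | [] => simp
  | [a] => simp
  | [a, b] => simp
  | a :: b :: c :: t =>
    exfalso
    have h1 : b < c := ha.2.1
    have h2 : b > c := (List.pairwise_cons.mp (List.pairwise_cons.mp hp).2).1 c (by simp)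
    omega

lemma alt_false_lt {s : List ℕ} (ha : Alt false s) (hp : s.Pairwise (· < ·)) :
    s.length ≤ 2 := by
  match s with
  | [] => simp
  | [a] => simp
  | [a, b] => simp
  | a :: b :: c :: t =>
    exfalso
    have h1 : c < b := ha.2.1
    have h2 : b < c := (List.pairwise_cons.mp (List.pairwise_cons.mp hp).2).1 c (by simp)
    omega

lemma turn_drop (l : List ℕ) (m j : ℕ) : turnP (l.drop m) j ↔ turnP l (m + j) := by
  unfold turnP
  rw [val_drop, val_drop, val_drop, ← Nat.add_assoc, ← Nat.add_assoc]

/-- all steps in an initial turning-free zone have the same direction -/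
lemma run_dir (l : List ℕ) (hadj : ∀ i, i + 1 < l.length → val l i ≠ val l (i+1))
    (k : ℕ) (hnt : ∀ v, v < k → ¬ turnP l v) :
    ∀ i, i ≤ k → i + 1 < l.length → (val l (i+1) < val l i ↔ val l 1 < val l 0) := by
  intro i
  induction i with
  | zero => intro _ _; rfl
  | succ i ih =>
    intro hik hi2
    have IH := ih (by omega) (by omega)
    have hne1 : val l i ≠ val l (i+1) := hadj i (by omega)
    have hne2 : val l (i+1) ≠ val l (i+2) := hadj (i+1) hi2
    have ht := hnt i (by omega)
    unfold turnP at ht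
    have e : val l (i+1+1) = val l (i+2) := rfl
    omega

lemma adj_ne (l : List ℕ) (hpw : l.Pairwise (· ≠ ·)) :
    ∀ i, i + 1 < l.length → val l i ≠ val l (i+1) := by
  intro i hi
  rw [val_eq l (by omega), val_eq l hi]
  exact (List.pairwise_iff_getElem.mp hpw) i (i+1) (by omega) hi (by omega)

section FirstTurn

variable {l : List ℕ} (hn : 2 ≤ l.length)

/-- `T` of a list with no turning points is `0`. -/
lemma T_eq_zero (hnt : ∀ v, v < l.length - 2 → ¬ turnP l v) : T l = 0 := by
  unfold T
  rw [Finset.card_eq_zero, Finset.filter_eq_empty_iff]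
  intro i hi
  exact hnt i (Finset.mem_range.mp hi)

lemma T_drop_first_turn {u : ℕ} (hu : u < l.length - 2) (ht : turnP l u)
    (hmin : ∀ v, v < u → ¬ turnP l v) :
    T l = T (l.drop (u+1)) + 1 := by
  have hld : (l.drop (u+1)).length = l.length - (u+1) := by simp
  have hset : (Finset.range (l.length - 2)).filter (fun i => turnP l i) =
      insert u (((Finset.range ((l.drop (u+1)).length - 2)).filter
        (fun j => turnP (l.drop (u+1)) j)).image (fun j => j + (u+1))) := by
    ext i
    simp only [Finset.mem_filter, Finset.mem_range, Finset.mem_insert, Finset.mem_image]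
    constructor
    · rintro ⟨hi, hti⟩
      rcases lt_trichotomy i u with h | h | h
      · exact absurd hti (hmin i h)
      · exact Or.inl h
      · refine Or.inr ⟨i - (u+1), ⟨by omega, ?_⟩, by omega⟩
        rw [turn_drop]
        have : u + 1 + (i - (u+1)) = i := by omega
        rw [this]; exact hti
    · rintro (rfl | ⟨j, ⟨hj, htj⟩, rfl⟩)
      · exact ⟨hu, ht⟩
      · rw [turn_drop] at htj
        refine ⟨by omega, ?_⟩
        have : u + 1 + j = j + (u + 1) := by omega
        rwa [this] at htj
  unfold T
  rw [hset, Finset.card_insert_of_notMem, Finset.card_image_of_injective _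
    (add_left_injective (u+1))]
  intro h
  obtain ⟨j, -, hj⟩ := Finset.mem_image.mp h
  omega

end FirstTurn

lemma fb_drop_first_turn (l : List ℕ) (hn : 2 ≤ l.length)
    (hadj : ∀ i, i + 1 < l.length → val l i ≠ val l (i+1))
    {u : ℕ} (hu2 : u < l.length - 2) (hturn : turnP l u)
    (hmin : ∀ v, v < u → ¬ turnP l v) :
    fb (l.drop (u+1)) = !(fb l) := by
  have hdir := run_dir l hadj u hmin
  have hv0 : val (l.drop (u+1)) 0 = val l (u+1) := by rw [val_drop]
  have hv1 : val (l.drop (u+1)) 1 = val l (u+2) := by rw [val_drop]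
  have hstepu := hdir u le_rfl (by omega)
  have hneu : val l (u+1) ≠ val l (u+2) := hadj (u+1) (by omega)
  have hkey : (val l (u+2) < val l (u+1)) ↔ ¬ (val l 1 < val l 0) := by
    unfold turnP at hturn; omega
  unfold fb
  rw [hv0, hv1]
  by_cases h : val l 1 < val l 0
  · have h2 : ¬ (val l (u+2) < val l (u+1)) := by omega
    simp [h, h2]
  · have h2 : val l (u+2) < val l (u+1) := hkey.mpr h
    simp [h, h2]

lemma val_zero_headI {l : List ℕ} (hl : l ≠ []) : val l 0 = l.headI := by
  cases l with
  | nil => simp at hl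
  | cons b t => rfl

lemma cons_head_sublist {a : ℕ} {s l : List ℕ} (hl : l ≠ []) (ha : a = l.headI)
    (hs : s.Sublist l.tail) : (a :: s).Sublist l := by
  cases l with
  | nil => simp at hl
  | cons b t =>
    have : a = b := ha
    subst this
    exact hs.cons₂ a

/-- The main lower bound: an alternating sublist of length `T l + 2` starting with
the head of `l`, in the direction of the first step. -/
lemma lower : ∀ (N : ℕ) (l : List ℕ), l.length ≤ N → 2 ≤ l.length → l.Pairwise (· ≠ ·) →
    ∃ s, s.Sublist l ∧ Alt (fb l) s ∧ s.length = T l + 2 ∧ s.headI = val l 0 := by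
  intro N
  induction N with
  | zero => intro l h1 h2 _; omega
  | succ N ih =>
    intro l hlen hn hpw
    have hadj := adj_ne l hpw
    have hfb01 : val l 1 ≠ val l 0 := (hadj 0 (by omega)).symm
    have hl0 : l = val l 0 :: l.tail := by
      cases l with
      | nil => simp at hn
      | cons a t => rfl
    by_cases hex : ∃ u, u < l.length - 2 ∧ turnP l u
    · classical
      have hmin_ex : ∃ u, u < l.length - 2 ∧ turnP l u ∧ ∀ v, v < u → ¬ turnP l v := by
        refine ⟨Nat.find hex, (Nat.find_spec hex).1, (Nat.find_spec hex).2, ?_⟩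
        intro v hv ht
        have h1 := (Nat.find_spec hex).1
        exact Nat.find_min hex hv ⟨by omega, ht⟩
      obtain ⟨u, hu2, hturn, hmin⟩ := hmin_ex
      have hdir := run_dir l hadj u hmin
      set l' := l.drop (u+1) with hl'_def
      have hld : l'.length = l.length - (u+1) := by simp [hl'_def]
      have h2' : 2 ≤ l'.length := by omega
      have hpw' : l'.Pairwise (· ≠ ·) := hpw.sublist (List.drop_sublist _ _)
      obtain ⟨s', hs'sub, hs'alt, hs'len, hs'head⟩ := ih l' (by omega) h2' hpw'
      have hT := T_drop_first_turn hu2 hturn hmin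
      rw [← hl'_def] at hT
      have hv0 : val l' 0 = val l (u+1) := by rw [hl'_def, val_drop]
      have hv1 : val l' 1 = val l (u+2) := by rw [hl'_def, val_drop]
      have hfb' : fb l' = !(fb l) := by
        rw [hl'_def]; exact fb_drop_first_turn l hn hadj hu2 hturn hmin
      have hcomp : if fb l = true then val l (u+1) < val l 0 else val l 0 < val l (u+1) := by
        rcases Nat.lt_or_ge (val l 1) (val l 0) with h | h
        · have : fb l = true := by simp [fb, h]
          rw [this, if_pos rfl]
          exact chain_gt (f := val l) (a := 0) (b := u+1)
            (fun i h1 h2 => (hdir i (by omega) (by omega)).mpr h) (by omega)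
        · have hlt : val l 0 < val l 1 := by omega
          have hfbf : fb l = false := by simp only [fb, decide_eq_false_iff_not]; omega
          rw [hfbf, if_neg (by simp)]
          exact chain_lt (f := val l) (a := 0) (b := u+1)
            (fun i h1 h2 => by
              have := hdir i (by omega) (by omega)
              have hne := hadj i (by omega)
              omega) (by omega)
      -- s' is nonempty
      have hs'ne : s' ≠ [] := by
        intro hc; rw [hc] at hs'len; simp at hs'len
      obtain ⟨b, t, rfl⟩ : ∃ b t, s' = b :: t := by
        cases s' with
        | nil => exact absurd rfl hs'ne
        | cons b t => exact ⟨b, t, rfl⟩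
      have hb : b = val l (u+1) := by simpa [hv0] using hs'head
      have hlne : l ≠ [] := by intro hc; rw [hc] at hn; simp at hn
      refine ⟨val l 0 :: b :: t, ?_, ?_, ?_, rfl⟩
      · refine cons_head_sublist hlne (val_zero_headI hlne) ?_
        have : l' = l.tail.drop u := by
          rw [hl'_def, ← List.drop_one, List.drop_drop, Nat.add_comm]
        exact hs'sub.trans (this ▸ List.drop_sublist u l.tail)
      · rw [alt_cons_cons]
        refine ⟨?_, ?_⟩
        · rw [hb]
          cases hfbl : fb l
          · rw [hfbl] at hcomp; simpa using hcomp
          · rw [hfbl] at hcomp; simpa using hcomp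
        · rw [← hfb']; exact hs'alt
      · have h5 : (b :: t).length = T l' + 2 := hs'len
        simp only [List.length_cons] at h5 ⊢
        omega
    · push_neg at hex
      have hdir := run_dir l hadj (l.length - 2) (fun v hv => hex v hv)
      have hT : T l = 0 := T_eq_zero (fun v hv => hex v hv)
      have hlast : val l (l.length - 1) ∈ l.tail := by
        rw [List.mem_iff_getElem?]
        refine ⟨l.length - 2, ?_⟩
        rw [← List.drop_one, List.getElem?_drop]
        rw [show 1 + (l.length - 2) = l.length - 1 from by omega]
        rw [List.getElem?_eq_getElem (by omega), val_eq l (by omega)]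
      have hlne : l ≠ [] := by intro hc; rw [hc] at hn; simp at hn
      refine ⟨[val l 0, val l (l.length - 1)], ?_, ?_, by simp [hT], rfl⟩
      · exact cons_head_sublist hlne (val_zero_headI hlne)
          (List.singleton_sublist.mpr hlast)
      · cases hfbl : fb l
        · have hup : val l 0 < val l 1 := by
            have : ¬ (val l 1 < val l 0) := by
              intro hc; simp [fb, hc] at hfbl
            omega
          refine ⟨?_, trivial⟩
          simp only [if_neg, Bool.false_eq_true, if_false]
          exact chain_lt (f := val l) (a := 0) (b := l.length - 1)
            (fun i h1 h2 => by
              have := hdir i (by omega) (by omega)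
              have hne := hadj i (by omega)
              omega) (by omega)
        · have hdn : val l 1 < val l 0 := by
            by_contra hc; simp [fb] at hfbl; omega
          refine ⟨?_, trivial⟩
          simp only [if_pos]
          exact chain_gt (f := val l) (a := 0) (b := l.length - 1)
            (fun i h1 h2 => (hdir i (by omega) (by omega)).mpr hdn) (by omega)

/-- The main upper bound. -/
lemma upper : ∀ (N : ℕ) (l : List ℕ), l.length ≤ N → 2 ≤ l.length → l.Pairwise (· ≠ ·) →
    ∀ (d : Bool) (s : List ℕ), s.Sublist l → Alt d s →
      s.length ≤ 1 + T l + (if fb l = d then 1 else 0) := by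
  intro N
  induction N with
  | zero => intro l h1 h2; omega
  | succ N ih =>
    intro l hlen hn hpw d s hs halt
    have hadj := adj_ne l hpw
    by_cases hex : ∃ u, u < l.length - 2 ∧ turnP l u
    · classical
      have hmin_ex : ∃ u, u < l.length - 2 ∧ turnP l u ∧ ∀ v, v < u → ¬ turnP l v := by
        refine ⟨Nat.find hex, (Nat.find_spec hex).1, (Nat.find_spec hex).2, ?_⟩
        intro v hv ht
        have h1 := (Nat.find_spec hex).1
        exact Nat.find_min hex hv ⟨by omega, ht⟩
      obtain ⟨u, hu2, hturn, hmin⟩ := hmin_ex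
      have hdir := run_dir l hadj u hmin
      have hld : (l.drop (u+1)).length = l.length - (u+1) := by simp
      have h2' : 2 ≤ (l.drop (u+1)).length := by omega
      have hpw' : (l.drop (u+1)).Pairwise (· ≠ ·) := hpw.sublist (List.drop_sublist _ _)
      have hT := T_drop_first_turn hu2 hturn hmin
      have hfb' : fb (l.drop (u+1)) = !(fb l) := fb_drop_first_turn l hn hadj hu2 hturn hmin
      have hsplit := hs
      rw [← List.take_append_drop (u+1) l] at hsplit
      obtain ⟨s1, s2, rfl, h1, h2⟩ := List.sublist_append_iff.mp hsplit
      have htl : (l.take (u+1)).length = u + 1 := by simp; omega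
      have hsteps : ∀ i, i + 1 < (l.take (u+1)).length →
          ((val (l.take (u+1)) (i+1) < val (l.take (u+1)) i) ↔ (val l 1 < val l 0)) := by
        intro i hi
        rw [htl] at hi
        rw [val_take l (by omega), val_take l (by omega)]
        exact hdir i (by omega) (by omega)
      have halt1 : Alt d s1 := alt_append_left halt
      have halt2 := alt_append_right halt
      have hIH := ih (l.drop (u+1)) (by omega) h2' hpw' _ s2 h2 halt2
      rw [hfb'] at hIH
      rw [List.length_append]
      cases hfbl : fb l with
      | true =>
        have hdn : val l 1 < val l 0 := by
          unfold fb at hfbl; exact of_decide_eq_true hfbl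
        have hpair : (l.take (u+1)).Pairwise (· > ·) :=
          pairwise_gt_of_steps _ (fun i hi => (hsteps i hi).mpr hdn)
        have hs1pair : s1.Pairwise (· > ·) := List.Pairwise.sublist h1 hpair
        rw [hfbl] at hIH
        cases d with
        | true =>
          have hb1 : s1.length ≤ 2 := alt_true_gt halt1 hs1pair
          by_cases hp : s1.length % 2 = 0 <;> simp [hp] at hIH <;> simp <;> omega
        | false =>
          have hb1 : s1.length ≤ 1 := alt_false_gt halt1 hs1pair
          by_cases hp : s1.length % 2 = 0 <;> simp [hp] at hIH <;> simp <;> omega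
      | false =>
        have hup : val l 0 < val l 1 := by
          unfold fb at hfbl
          have h0 := of_decide_eq_false hfbl
          have := hadj 0 (by omega)
          have e0 : val l (0+1) = val l 1 := rfl
          omega
        have hpair : (l.take (u+1)).Pairwise (· < ·) :=
          pairwise_lt_of_steps _ (fun i hi => by
            have := hsteps i hi
            have h9 : val (l.take (u+1)) i ≠ val (l.take (u+1)) (i+1) := by
              rw [htl] at hi
              rw [val_take l (by omega), val_take l (by omega)]
              exact hadj i (by omega)
            omega)
        have hs1pair : s1.Pairwise (· < ·) := List.Pairwise.sublist h1 hpair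
        rw [hfbl] at hIH
        cases d with
        | true =>
          have hb1 : s1.length ≤ 1 := alt_true_lt halt1 hs1pair
          by_cases hp : s1.length % 2 = 0 <;> simp [hp] at hIH <;> simp <;> omega
        | false =>
          have hb1 : s1.length ≤ 2 := alt_false_lt halt1 hs1pair
          by_cases hp : s1.length % 2 = 0 <;> simp [hp] at hIH <;> simp <;> omega
    · push_neg at hex
      have hdir := run_dir l hadj (l.length - 2) hex
      have hT : T l = 0 := T_eq_zero hex
      rw [hT]
      cases hfbl : fb l with
      | true =>
        have hdn : val l 1 < val l 0 := by
          unfold fb at hfbl; exact of_decide_eq_true hfbl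
        have hpair : l.Pairwise (· > ·) :=
          pairwise_gt_of_steps l (fun i hi => (hdir i (by omega) hi).mpr hdn)
        have hsp := List.Pairwise.sublist hs hpair
        cases d with
        | true =>
          have := alt_true_gt halt hsp
          simp
          omega
        | false =>
          have := alt_false_gt halt hsp
          simp
          omega
      | false =>
        have hup : val l 0 < val l 1 := by
          unfold fb at hfbl
          have h0 := of_decide_eq_false hfbl
          have := hadj 0 (by omega)
          have e0 : val l (0+1) = val l 1 := rfl
          omega
        have hpair : l.Pairwise (· < ·) :=
          pairwise_lt_of_steps l (fun i hi => by
            have := hdir i (by omega) hi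
            have := hadj i (by omega)
            omega)
        have hsp := List.Pairwise.sublist hs hpair
        cases d with
        | true =>
          have := alt_true_lt halt hsp
          simp
          omega
        | false =>
          have := alt_false_lt halt hsp
          simp
          omega

lemma getElem_bang_eq_val (l : List ℕ) (i : ℕ) : l[i]! = val l i := by
  rw [val, List.getD_eq_getElem?_getD]; simp only [List.getElem!_eq_getElem?_getD, Nat.default_eq_zero]



lemma permList_length (n : ℕ) (w : Equiv.Perm (Fin n)) : (permList n w).length = n := by
  simp [permList]

lemma permList_pairwise (n : ℕ) (w : Equiv.Perm (Fin n)) :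
    (permList n w).Pairwise (· ≠ ·) := by
  rw [permList, List.pairwise_ofFn]
  intro i j hij hc
  exact absurd (w.injective (Fin.val_injective hc)) (Fin.ne_of_lt hij)

lemma val_permList (n : ℕ) (w : Equiv.Perm (Fin n)) {i : ℕ} (h : i < n) :
    val (permList n w) i = (w ⟨i, h⟩ : ℕ) := by
  rw [val_eq _ (by rw [permList_length]; exact h)]
  simp only [permList]
  rw [List.getElem_ofFn]

lemma runCount_eq (n : ℕ) (hn : 2 ≤ n) (w : Equiv.Perm (Fin n)) :
    runCount n w = 1 + T (permList n w) := by
  rw [runCount]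
  simp only [if_neg (by omega : ¬ n ≤ 1)]
  congr 1
  unfold T
  rw [permList_length]
  congr 1
  apply Finset.filter_congr
  intro i _
  simp only [getElem_bang_eq_val, turnP]

lemma asLen_eq (n : ℕ) (hn : 2 ≤ n) (w : Equiv.Perm (Fin n)) :
    asLen n w = 1 + T (permList n w) + (if fb (permList n w) = true then 1 else 0) := by
  set l := permList n w with hl
  have hlen : l.length = n := permList_length n w
  have hpw : l.Pairwise (· ≠ ·) := permList_pairwise n w
  set M := 1 + T l + (if fb l = true then 1 else 0) with hM
  set S : Set ℕ := {k | ∃ s : List ℕ, s.Sublist l ∧ IsAlt s ∧ s.length = k} with hS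
  have hub : ∀ k ∈ S, k ≤ M := by
    rintro k ⟨s, hsub, halt, rfl⟩
    exact upper l.length l le_rfl (by omega) hpw true s hsub ((isAlt_iff_alt s).mp halt)
  have hmem : M ∈ S := by
    obtain ⟨s, hsub, halt, hslen, -⟩ := lower l.length l le_rfl (by omega) hpw
    cases hfbl : fb l with
    | true =>
      rw [hfbl] at halt
      exact ⟨s, hsub, (isAlt_iff_alt s).mpr halt, by rw [hM, hfbl]; simp; omega⟩
    | false =>
      rw [hfbl] at halt
      obtain ⟨b, t, rfl⟩ : ∃ b t, s = b :: t := by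
        cases s with
        | nil => simp at hslen
        | cons b t => exact ⟨b, t, rfl⟩
      refine ⟨t, (List.tail_sublist _).trans hsub, (isAlt_iff_alt t).mpr (alt_cons halt), ?_⟩
      rw [hM, hfbl]
      simp only [List.length_cons] at hslen
      simp
      omega
  apply le_antisymm
  · exact csSup_le ⟨M, hmem⟩ hub
  · exact le_csSup ⟨M, fun k hk => hub k hk⟩ hmem

/-- the complement permutation -/
def cpl (n : ℕ) (w : Equiv.Perm (Fin n)) : Equiv.Perm (Fin n) := w.trans Fin.revPerm

lemma cpl_cpl (n : ℕ) (w : Equiv.Perm (Fin n)) : cpl n (cpl n w) = w := by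
  ext i
  simp [cpl, Fin.revPerm, Fin.rev_rev]

lemma val_cpl (n : ℕ) (w : Equiv.Perm (Fin n)) {i : ℕ} (h : i < n) :
    val (permList n (cpl n w)) i = n - (val (permList n w) i + 1) := by
  rw [val_permList n _ h, val_permList n _ h]
  simp [cpl, Fin.revPerm, Fin.val_rev]

lemma T_cpl (n : ℕ) (hn : 2 ≤ n) (w : Equiv.Perm (Fin n)) :
    T (permList n (cpl n w)) = T (permList n w) := by
  unfold T
  rw [permList_length, permList_length]
  congr 1
  apply Finset.filter_congr
  intro i hi
  rw [Finset.mem_range] at hi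
  have h0 : i < n := by omega
  have h1 : i + 1 < n := by omega
  have h2 : i + 2 < n := by omega
  have b0 : val (permList n w) i < n := by
    rw [val_permList n w h0]; exact (w _).isLt
  have b1 : val (permList n w) (i+1) < n := by
    rw [val_permList n w h1]; exact (w _).isLt
  have b2 : val (permList n w) (i+2) < n := by
    rw [val_permList n w h2]; exact (w _).isLt
  unfold turnP
  rw [val_cpl n w h0, val_cpl n w h1, val_cpl n w h2]
  omega

lemma fb_cpl (n : ℕ) (hn : 2 ≤ n) (w : Equiv.Perm (Fin n)) :
    fb (permList n (cpl n w)) = !(fb (permList n w)) := by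
  have h0 : (0:ℕ) < n := by omega
  have h1 : 1 < n := by omega
  have hne : val (permList n w) 0 ≠ val (permList n w) 1 :=
    adj_ne _ (permList_pairwise n w) 0 (by rw [permList_length]; omega)
  have b0 : val (permList n w) 0 < n := by
    rw [val_permList n w h0]; exact (w _).isLt
  have b1 : val (permList n w) 1 < n := by
    rw [val_permList n w h1]; exact (w _).isLt
  unfold fb
  rw [val_cpl n w h0, val_cpl n w h1]
  by_cases h : val (permList n w) 1 < val (permList n w) 0
  · have : ¬ (n - (val (permList n w) 1 + 1) < n - (val (permList n w) 0 + 1)) := by omega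
    simp [h, this]
  · have : n - (val (permList n w) 1 + 1) < n - (val (permList n w) 0 + 1) := by omega
    simp [h, this]

lemma runCount_cpl (n : ℕ) (hn : 2 ≤ n) (w : Equiv.Perm (Fin n)) :
    runCount n (cpl n w) = runCount n w := by
  rw [runCount_eq n hn, runCount_eq n hn, T_cpl n hn]

lemma asLen_runCount (n : ℕ) (hn : 2 ≤ n) (w : Equiv.Perm (Fin n)) :
    asLen n w = runCount n w + (if fb (permList n w) = true then 1 else 0) := by
  rw [asLen_eq n hn, runCount_eq n hn]

lemma runCount_le (n : ℕ) (hn : 2 ≤ n) (w : Equiv.Perm (Fin n)) :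
    runCount n w ≤ n - 1 := by
  rw [runCount_eq n hn]
  have : T (permList n w) ≤ n - 2 := by
    unfold T
    rw [permList_length]
    calc ((Finset.range (n-2)).filter _).card ≤ (Finset.range (n-2)).card :=
          Finset.card_filter_le _ _
      _ = n - 2 := Finset.card_range _
  omega

lemma runCount_pos (n : ℕ) (hn : 2 ≤ n) (w : Equiv.Perm (Fin n)) :
    1 ≤ runCount n w := by
  rw [runCount_eq n hn]; omega

lemma asLen_pos (n : ℕ) (hn : 2 ≤ n) (w : Equiv.Perm (Fin n)) :
    1 ≤ asLen n w := by
  rw [asLen_eq n hn]; omega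



open Classical in
/-- permutations with given run count and first step descending -/
noncomputable def hC (n k : ℕ) : ℕ :=
  (Finset.univ.filter (fun w : Equiv.Perm (Fin n) =>
    runCount n w = k ∧ fb (permList n w) = true)).card

open Classical in
noncomputable def hC' (n k : ℕ) : ℕ :=
  (Finset.univ.filter (fun w : Equiv.Perm (Fin n) =>
    runCount n w = k ∧ fb (permList n w) = false)).card

open Classical in
lemma hC_eq_hC' (n k : ℕ) (hn : 2 ≤ n) : hC n k = hC' n k := by
  unfold hC hC'
  apply Finset.card_bij' (fun w _ => cpl n w) (fun w _ => cpl n w)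
  · intro w hw
    simp only [Finset.mem_filter, Finset.mem_univ, true_and] at hw ⊢
    rw [runCount_cpl n hn, fb_cpl n hn, hw.2]
    exact ⟨hw.1, rfl⟩
  · intro w hw
    simp only [Finset.mem_filter, Finset.mem_univ, true_and] at hw ⊢
    rw [runCount_cpl n hn, fb_cpl n hn, hw.2]
    exact ⟨hw.1, rfl⟩
  · intro w _; exact cpl_cpl n w
  · intro w _; exact cpl_cpl n w

open Classical in
lemma gCount_eq (n k : ℕ) (hn : 2 ≤ n) : gCount n k = hC n k + hC' n k := by
  rw [gCount, Nat.card_eq_fintype_card, Fintype.card_subtype]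
  unfold hC hC'
  rw [← Finset.filter_filter, ← Finset.filter_filter]
  have := Finset.card_filter_add_card_filter_not
    (s := Finset.univ.filter (fun w : Equiv.Perm (Fin n) => runCount n w = k))
    (p := fun w => fb (permList n w) = true)
  rw [← this]
  congr 2
  all_goals apply Finset.filter_congr
  all_goals intro w _
  all_goals simp

open Classical in
lemma aCount_eq (n k : ℕ) (hn : 2 ≤ n) (hk : 1 ≤ k) :
    aCount n k = hC n (k-1) + hC' n k := by
  rw [aCount, Nat.card_eq_fintype_card, Fintype.card_subtype]
  unfold hC hC'
  have hsplit : (Finset.univ.filter (fun w : Equiv.Perm (Fin n) => asLen n w = k)) =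
      (Finset.univ.filter (fun w : Equiv.Perm (Fin n) =>
        runCount n w = k - 1 ∧ fb (permList n w) = true)) ∪
      (Finset.univ.filter (fun w : Equiv.Perm (Fin n) =>
        runCount n w = k ∧ fb (permList n w) = false)) := by
    ext w
    simp only [Finset.mem_filter, Finset.mem_univ, true_and, Finset.mem_union]
    rw [asLen_runCount n hn w]
    have hrc := runCount_pos n hn w
    cases hfb : fb (permList n w) with
    | true =>
      simp
      try omega
    | false =>
      simp
      try omega
  rw [hsplit, Finset.card_union_of_disjoint]
  rw [Finset.disjoint_filter]
  intro w _ hw1 hw2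
  rw [hw1.2] at hw2
  simp at hw2

lemma two_aCount (n k : ℕ) (hn : 2 ≤ n) (hk : 1 ≤ k) :
    2 * aCount n k = gCount n k + gCount n (k-1) := by
  rw [aCount_eq n k hn hk, gCount_eq n k hn, gCount_eq n (k-1) hn,
    ← hC_eq_hC' n k hn, ← hC_eq_hC' n (k-1) hn]
  omega

open Classical in
lemma aCount_zero (n : ℕ) (hn : 2 ≤ n) : aCount n 0 = 0 := by
  rw [aCount, Nat.card_eq_fintype_card, Fintype.card_subtype]
  rw [Finset.card_eq_zero, Finset.filter_eq_empty_iff]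
  intro w _
  have := asLen_pos n hn w
  omega

open Classical in
lemma gCount_zero (n : ℕ) (hn : 2 ≤ n) : gCount n 0 = 0 := by
  rw [gCount, Nat.card_eq_fintype_card, Fintype.card_subtype]
  rw [Finset.card_eq_zero, Finset.filter_eq_empty_iff]
  intro w _
  have := runCount_pos n hn w
  omega

open Classical in
lemma gCount_top (n : ℕ) (hn : 2 ≤ n) : gCount n n = 0 := by
  rw [gCount, Nat.card_eq_fintype_card, Fintype.card_subtype]
  rw [Finset.card_eq_zero, Finset.filter_eq_empty_iff]
  intro w _
  have := runCount_le n hn w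
  omega

lemma coeff_CX (f : ℕ → ℤ) (n j : ℕ) :
    (∑ k ∈ Finset.range (n+1), Polynomial.C (f k) * Polynomial.X ^ k).coeff j
      = if j < n+1 then f j else 0 := by
  rw [Polynomial.finset_sum_coeff]
  simp only [Polynomial.coeff_C_mul, Polynomial.coeff_X_pow, mul_ite, mul_one, mul_zero]
  rw [Finset.sum_ite_eq (Finset.range (n+1)) j f]
  simp [Finset.mem_range]

end AltAux

theorem T_eq_half_G (n : ℕ) (hn : 2 ≤ n) :
    2 * ∑ k ∈ Finset.range (n + 1),
        Polynomial.C (aCount n k : ℤ) * Polynomial.X ^ k =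
      (1 + Polynomial.X) * ∑ k ∈ Finset.range (n + 1),
        Polynomial.C (gCount n k : ℤ) * Polynomial.X ^ k := by
  apply Polynomial.ext
  intro j
  rw [two_mul, add_mul, one_mul, Polynomial.coeff_add, Polynomial.coeff_add,
    AltAux.coeff_CX (fun k => (aCount n k : ℤ)) n j,
    AltAux.coeff_CX (fun k => (gCount n k : ℤ)) n j]
  cases j with
  | zero =>
    rw [Polynomial.mul_coeff_zero, Polynomial.coeff_X_zero, zero_mul]
    simp [AltAux.aCount_zero n hn, AltAux.gCount_zero n hn]
  | succ j =>
    rw [Polynomial.coeff_X_mul, AltAux.coeff_CX (fun k => (gCount n k : ℤ)) n j]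
    by_cases h1 : j + 1 < n + 1
    · have h2 : j < n + 1 := by omega
      rw [if_pos h1, if_pos h1, if_pos h2]
      have := AltAux.two_aCount n (j+1) hn (by omega)
      simp only [Nat.add_sub_cancel] at this
      omega
    · rw [if_neg h1, if_neg h1]
      by_cases h2 : j < n + 1
      · have hj : j = n := by omega
        rw [if_pos h2, hj]
        simp [AltAux.gCount_top n hn]
      · rw [if_neg h2]
end
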